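/- Let U ⊆ ℝ^(n+2) be open and Z : U → ℝ^(n+2) differentiable with fderiv ℝ Z p = φ(p) • id for a function φ : U → ℝ and every p ∈ U. Let p ∈ U with η(Z p, Z p) ≠ 0 and let ε ∈ {-1, 1} be such that ε * η(Z p, Z p) > 0. Then for every v ∈ ℝ^(n+2), the derivative of q ↦ √|η(Z q, Z q)| at p in the direction v equals ε * φ(p) * η(Z p, v) / √|η(Z p, Z p)|. Consequently, if (ξ, N) is a null frame on U and v is a screen vector at p, this derivative equals ε * φ(p) * η(Z*(p), v) / √|η(Z p, Z p)| — the flat-ambient form of the paper's formula ∇*|Z| = (ε_Z φ / |Z|) Z* for the screen gradient of the norm of a closed conformal field. -/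

import Mathlib

open scoped BigOperators

noncomputable section

/-- Euclidean space `ℝ^m`. -/
abbrev E (m : ℕ) : Type := EuclideanSpace ℝ (Fin m)

/-- The Minkowski bilinear form `η(x,y) = -(x 0)(y 0) + ∑_{i≥1} (x i)(y i)` on `ℝ^(n+2)`. -/
def eta {n : ℕ} (x y : E (n + 2)) : ℝ :=
  (∑ i, x i * y i) - 2 * (x 0 * y 0)

open scoped RealInnerProductSpace

lemma eta_symm {n : ℕ} (x y : E (n+2)) : eta x y = eta y x := by
  simp [eta, mul_comm]

lemma eta_sub_left {n : ℕ} (x y z : E (n+2)) : eta (x - y) z = eta x z - eta y z := by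
  simp [eta, sub_mul, Finset.sum_sub_distrib]; ring

lemma eta_smul_left {n : ℕ} (r : ℝ) (x y : E (n+2)) : eta (r • x) y = r * eta x y := by
  simp [eta, mul_assoc]; rw [← Finset.mul_sum]; ring

lemma eta_eq_inner {n : ℕ} (x y : E (n+2)) : eta x y = ⟪x, y⟫ - 2 * (x 0 * y 0) := by
  simp [eta, PiLp.inner_apply, RCLike.inner_apply, conj_trivial]
  exact Finset.sum_congr rfl fun i _ => mul_comm _ _


/-- Screen projection `P_p(w) = w - η(w,N)ξ - η(w,ξ)N` determined by the null frame at a point. -/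
def sproj {n : ℕ} (xi N w : E (n + 2)) : E (n + 2) :=
  w - eta w N • xi - eta w xi • N

/-- Screen shape operator `A*_ξ(p)(v) = -P_p(D_v ξ (p))`. -/
def Astar {n : ℕ} (xi N : E (n + 2) → E (n + 2)) (p v : E (n + 2)) : E (n + 2) :=
  -sproj (xi p) (N p) (fderiv ℝ xi p v)

/-- Shape operator `A_N(p)(v) = -P_p(D_v N (p))`. -/
def AN {n : ℕ} (xi N : E (n + 2) → E (n + 2)) (p v : E (n + 2)) : E (n + 2) :=
  -sproj (xi p) (N p) (fderiv ℝ N p v)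

/-- Transversal one-form `τ_p(v) = η(D_v N(p), ξ p)`. -/
def tau {n : ℕ} (xi N : E (n + 2) → E (n + 2)) (p v : E (n + 2)) : ℝ :=
  eta (fderiv ℝ N p v) (xi p)

/-- Screen part `Z*(p) = P_p(Z p)` of a vector field. -/
def Zstar {n : ℕ} (xi N Z : E (n + 2) → E (n + 2)) (p : E (n + 2)) : E (n + 2) :=
  sproj (xi p) (N p) (Z p)

/-- `A_{Z⊥}(p)(v) = η(Z p, N p) • A*_ξ(p)(v) + η(Z p, ξ p) • A_N(p)(v)`. -/
def AZperp {n : ℕ} (xi N Z : E (n + 2) → E (n + 2)) (p v : E (n + 2)) : E (n + 2) :=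
  eta (Z p) (N p) • Astar xi N p v + eta (Z p) (xi p) • AN xi N p v

/-- The screen gradient of the norm of a closed conformal field:
`D_v |Z| = ε φ η(Z, v)/|Z|`, and for screen vectors `D_v |Z| = ε φ η(Z*, v)/|Z|`
(flat Minkowski ambient form of `∇*|Z| = (ε_Z φ/|Z|) Z*`). -/
theorem screen_gradient_norm_cc_field {n : ℕ}
    (U : Set (E (n + 2))) (hU : IsOpen U)
    (ξ N Z : E (n + 2) → E (n + 2)) (φ : E (n + 2) → ℝ) (p : E (n + 2)) (hp : p ∈ U)
    (ε : ℝ) (hε : ε = -1 ∨ ε = 1)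
    (hZd : ∀ q ∈ U, DifferentiableAt ℝ Z q)
    (hCC : ∀ q ∈ U, fderiv ℝ Z q = φ q • ContinuousLinearMap.id ℝ (E (n + 2)))
    (hZ0 : eta (Z p) (Z p) ≠ 0)
    (hεZ : 0 < ε * eta (Z p) (Z p))
    (hξξ : ∀ q ∈ U, eta (ξ q) (ξ q) = 0)
    (hNN : ∀ q ∈ U, eta (N q) (N q) = 0)
    (hξN : ∀ q ∈ U, eta (ξ q) (N q) = 1) :
    (∀ v : E (n + 2),
      fderiv ℝ (fun q => Real.sqrt |eta (Z q) (Z q)|) p v =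
        ε * φ p * eta (Z p) v / Real.sqrt |eta (Z p) (Z p)|) ∧
    (∀ v : E (n + 2), eta v (ξ p) = 0 → eta v (N p) = 0 →
      fderiv ℝ (fun q => Real.sqrt |eta (Z q) (Z q)|) p v =
        ε * φ p * eta (Zstar ξ N Z p) v / Real.sqrt |eta (Z p) (Z p)|) := by
  -- derivative of q ↦ η(Z q, Z q)
  have hZp : HasFDerivAt Z (φ p • ContinuousLinearMap.id ℝ (E (n+2))) p := by
    have h := (hZd p hp).hasFDerivAt
    rwa [hCC p hp] at h
  have h1 := hZp.inner ℝ hZp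
  have h2 : HasFDerivAt (fun q => Z q 0)
      ((EuclideanSpace.proj (0 : Fin (n+2))).comp (φ p • ContinuousLinearMap.id ℝ (E (n+2)))) p :=
    by exact (EuclideanSpace.proj (0 : Fin (n+2))).hasFDerivAt.comp p hZp
  have h3 := (h2.mul h2).const_mul (2:ℝ)
  have hF0 := h1.sub h3
  have heqf : (fun q => (⟪Z q, Z q⟫ : ℝ) - 2 * (Z q 0 * Z q 0)) = fun q => eta (Z q) (Z q) := by
    funext q; rw [eta_eq_inner]
  replace hF0 := (show HasFDerivAt (fun q => (⟪Z q, Z q⟫ : ℝ) - 2 * (Z q 0 * Z q 0)) _ p from hF0)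
  rw [heqf] at hF0
  set F := ((fderivInnerCLM ℝ (Z p, Z p)).comp
      ((φ p • ContinuousLinearMap.id ℝ (E (n + 2))).prod (φ p • ContinuousLinearMap.id ℝ (E (n + 2)))) -
      (2:ℝ) • (Z p 0 • (EuclideanSpace.proj (0:Fin (n+2))).comp (φ p • ContinuousLinearMap.id ℝ (E (n + 2))) +
          Z p 0 • (EuclideanSpace.proj (0:Fin (n+2))).comp (φ p • ContinuousLinearMap.id ℝ (E (n + 2))))) with hFdef
  have hF : HasFDerivAt (fun q => eta (Z q) (Z q)) F p := hF0
  have hFv : ∀ v : E (n+2), F v = 2 * φ p * eta (Z p) v := by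
    intro v
    have e1 : ∀ (w : E (n+2)), ∑ x, w x * (φ p * v x) = φ p * ∑ x, w x * v x := by
      intro w; rw [Finset.mul_sum]; exact Finset.sum_congr rfl fun i _ => by ring
    have e2 : ∀ (w : E (n+2)), ∑ x, (φ p * v x) * w x = φ p * ∑ x, w x * v x := by
      intro w; rw [Finset.mul_sum]; exact Finset.sum_congr rfl fun i _ => by ring
    simp [hFdef, eta, fderivInnerCLM_apply, PiLp.inner_apply, RCLike.inner_apply, conj_trivial,
      e1, e2]
    ring
  -- |η(Z,Z)| = ε·η(Z,Z) where positive
  have habs : ∀ t : ℝ, 0 < ε * t → |t| = ε * t := by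
    rcases hε with h | h <;> subst h <;> intro t ht
    · have : t < 0 := by linarith [neg_pos.mp (by linarith : 0 < -t)]
      rw [abs_of_neg this]; ring
    · rw [one_mul] at ht ⊢; exact abs_of_pos ht
  have hcont : ContinuousAt (fun q => eta (Z q) (Z q)) p := hF.differentiableAt.continuousAt
  have hev : ∀ᶠ q in nhds p, 0 < ε * eta (Z q) (Z q) :=
    (continuousAt_const.mul hcont).eventually (eventually_gt_nhds hεZ)
  have heq : (fun q => Real.sqrt |eta (Z q) (Z q)|) =ᶠ[nhds p]
      (fun q => Real.sqrt (ε * eta (Z q) (Z q))) :=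
    hev.mono fun q hq => by dsimp only; rw [habs _ hq]
  have hg : HasFDerivAt (fun q => Real.sqrt (ε * eta (Z q) (Z q)))
      ((1 / (2 * Real.sqrt (ε * eta (Z p) (Z p)))) • (ε • F)) p :=
    (Real.hasDerivAt_sqrt hεZ.ne').comp_hasFDerivAt p (hF.const_mul ε)
  have hfd : fderiv ℝ (fun q => Real.sqrt |eta (Z q) (Z q)|) p =
      (1 / (2 * Real.sqrt (ε * eta (Z p) (Z p)))) • (ε • F) := by
    rw [heq.fderiv_eq, hg.fderiv]
  have habsp : |eta (Z p) (Z p)| = ε * eta (Z p) (Z p) := habs _ hεZ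
  have hsne : Real.sqrt |eta (Z p) (Z p)| ≠ 0 := by
    rw [Real.sqrt_ne_zero' ]
    exact abs_pos.mpr hZ0
  have main : ∀ v : E (n + 2),
      fderiv ℝ (fun q => Real.sqrt |eta (Z q) (Z q)|) p v =
        ε * φ p * eta (Z p) v / Real.sqrt |eta (Z p) (Z p)| := by
    intro v
    rw [hfd]
    simp only [ContinuousLinearMap.smul_apply, smul_eq_mul, hFv v, ← habsp]
    field_simp
  refine ⟨main, fun v hv1 hv2 => ?_⟩
  have : eta (Zstar ξ N Z p) v = eta (Z p) v := by
    rw [Zstar, sproj, eta_sub_left, eta_sub_left, eta_smul_left, eta_smul_left,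
      eta_symm (ξ p) v, eta_symm (N p) v, hv1, hv2]
    ring
  rw [this]
  exact main v


end
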